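/- Let a_1,…,a_n and b_1,…,b_n be real numbers with b_i > 0 and a_1/b_1 ≤ a_2/b_2 ≤ … ≤ a_n/b_n, where at least one of the ratio inequalities is strict. Define A(x) = Σ_{i=1}^n a_i x^i and B(x) = Σ_{i=1}^n b_i x^i. Then A(x)/B(x) is monotone non-decreasing on (0, ∞). -/

import Mathlib

open Finset

theorem stmt_18 (n : ℕ) (a b : ℕ → ℝ)
    (hb : ∀ i ∈ Finset.Icc 1 n, 0 < b i)
    (hmono : ∀ i, 1 ≤ i → i < n → a i / b i ≤ a (i + 1) / b (i + 1))
    (hstrict : ∃ i, 1 ≤ i ∧ i < n ∧ a i / b i < a (i + 1) / b (i + 1)) :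
    MonotoneOn
      (fun x : ℝ => (∑ i ∈ Finset.Icc 1 n, a i * x ^ i) / (∑ i ∈ Finset.Icc 1 n, b i * x ^ i))
      (Set.Ioi 0) := by
  obtain ⟨i0, hi0, hi0n, _⟩ := hstrict
  have hn : 1 ≤ n := le_of_lt (lt_of_le_of_lt hi0 hi0n)
  have hne : (Finset.Icc 1 n).Nonempty := ⟨1, by simp [hn]⟩
  have hr : ∀ k i, 1 ≤ i → i + k ≤ n → a i / b i ≤ a (i + k) / b (i + k) := by
    intro k
    induction k with
    | zero => intro i _ _; simp
    | succ k ih =>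
      intro i h1 h2
      refine (ih i h1 (by omega)).trans ?_
      exact hmono (i + k) (by omega) (by omega)
  have hab : ∀ i ∈ Finset.Icc 1 n, ∀ j ∈ Finset.Icc 1 n, i ≤ j →
      a i * b j ≤ a j * b i := by
    intro i hi j hj hij
    simp only [Finset.mem_Icc] at hi hj
    obtain ⟨k, rfl⟩ := Nat.exists_eq_add_of_le hij
    have h := hr k i hi.1 (by omega)
    have hbi := hb i (by simp [Finset.mem_Icc]; omega)
    have hbj := hb (i + k) (by simp [Finset.mem_Icc]; omega)
    exact (div_le_div_iff₀ hbi hbj).1 h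
  intro x hx y hy hxy
  simp only [Set.mem_Ioi] at hx hy
  have hBpos : ∀ z : ℝ, 0 < z → 0 < ∑ i ∈ Finset.Icc 1 n, b i * z ^ i :=
    fun z hz => Finset.sum_pos (fun i hi => mul_pos (hb i hi) (pow_pos hz i)) hne
  simp only
  rw [div_le_div_iff₀ (hBpos x hx) (hBpos y hy)]
  have hpow : ∀ i j : ℕ, i ≤ j → x ^ j * y ^ i ≤ x ^ i * y ^ j := by
    intro i j hij
    obtain ⟨k, rfl⟩ := Nat.exists_eq_add_of_le hij
    have h1 : x ^ k ≤ y ^ k := pow_le_pow_left₀ hx.le hxy k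
    have hxi : (0:ℝ) ≤ x ^ i := (pow_pos hx i).le
    have hyi : (0:ℝ) ≤ y ^ i := (pow_pos hy i).le
    have hxk : (0:ℝ) ≤ x ^ k := (pow_pos hx k).le
    calc x ^ (i + k) * y ^ i = x ^ i * y ^ i * x ^ k := by rw [pow_add]; ring
    _ ≤ x ^ i * y ^ i * y ^ k := by
        have : (0:ℝ) ≤ x ^ i * y ^ i := mul_nonneg hxi hyi
        nlinarith
    _ = x ^ i * y ^ (i + k) := by rw [pow_add]; ring
  set s := Finset.Icc 1 n with hs
  have key : ∀ i ∈ s, ∀ j ∈ s,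
      (a i * x ^ i * (b j * y ^ j) - a i * y ^ i * (b j * x ^ j))
    + (a j * x ^ j * (b i * y ^ i) - a j * y ^ j * (b i * x ^ i)) ≤ 0 := by
    intro i hi j hj
    rcases le_total i j with h | h
    · have h1 := hab i hi j hj h
      have h2 := hpow i j h
      have h3 : (a i * b j - a j * b i) * (x ^ i * y ^ j - x ^ j * y ^ i) ≤ 0 :=
        mul_nonpos_of_nonpos_of_nonneg (by linarith) (by linarith)
      nlinarith [h3]
    · have h1 := hab j hj i hi h
      have h2 := hpow j i h
      have h3 : (a j * b i - a i * b j) * (x ^ j * y ^ i - x ^ i * y ^ j) ≤ 0 :=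
        mul_nonpos_of_nonpos_of_nonneg (by linarith) (by linarith)
      nlinarith [h3]
  have hcomm : ∑ i ∈ s, ∑ j ∈ s,
      (a j * x ^ j * (b i * y ^ i) - a j * y ^ j * (b i * x ^ i))
    = ∑ i ∈ s, ∑ j ∈ s,
      (a i * x ^ i * (b j * y ^ j) - a i * y ^ i * (b j * x ^ j)) := Finset.sum_comm
  have hsum : ∑ i ∈ s, ∑ j ∈ s,
      (a i * x ^ i * (b j * y ^ j) - a i * y ^ i * (b j * x ^ j)) ≤ 0 := by
    have h2 : ∑ i ∈ s, ∑ j ∈ s,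
        ((a i * x ^ i * (b j * y ^ j) - a i * y ^ i * (b j * x ^ j))
       + (a j * x ^ j * (b i * y ^ i) - a j * y ^ j * (b i * x ^ i))) ≤ 0 := by
      apply Finset.sum_nonpos
      intro i hi
      exact Finset.sum_nonpos fun j hj => key i hi j hj
    simp only [Finset.sum_add_distrib] at h2
    rw [hcomm] at h2
    linarith
  have expand : ∀ u v : ℝ, (∑ i ∈ s, a i * u ^ i) * (∑ j ∈ s, b j * v ^ j)
      = ∑ i ∈ s, ∑ j ∈ s, a i * u ^ i * (b j * v ^ j) := by
    intro u v
    rw [Finset.sum_mul]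
    exact Finset.sum_congr rfl fun i _ => by rw [Finset.mul_sum]
  rw [expand, expand]
  have hsplit : ∑ i ∈ s, ∑ j ∈ s, (a i * x ^ i * (b j * y ^ j) - a i * y ^ i * (b j * x ^ j))
      = (∑ i ∈ s, ∑ j ∈ s, a i * x ^ i * (b j * y ^ j))
        - (∑ i ∈ s, ∑ j ∈ s, a i * y ^ i * (b j * x ^ j)) := by
    rw [← Finset.sum_sub_distrib]
    exact Finset.sum_congr rfl fun i _ => Finset.sum_sub_distrib ..
  rw [hsplit] at hsum
  linarith
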